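/- If T is a spider of order n ≥ 3, then γ_dR(T) ≤ n + 1. -/
import Mathlib


/-- A double Roman dominating function on a simple graph `G`:
values in `{0,1,2,3}`, every vertex with value `0` has two neighbors with value `2`
or one neighbor with value `3`, and every vertex with value `1` has a neighbor with
value at least `2`. -/
def IsDRDF {V : Type*} (G : SimpleGraph V) (f : V → ℕ) : Prop :=
  (∀ v, f v ≤ 3) ∧
  (∀ v, f v = 0 →
    (∃ u w, u ≠ w ∧ G.Adj v u ∧ G.Adj v w ∧ f u = 2 ∧ f w = 2) ∨ ∃ u, G.Adj v u ∧ f u = 3) ∧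
  (∀ v, f v = 1 → ∃ u, G.Adj v u ∧ 2 ≤ f u)

/-- The double Roman domination number: the minimum weight of a DRDF. -/
noncomputable def gammaDR {V : Type*} [Fintype V] (G : SimpleGraph V) : ℕ :=
  sInf {w | ∃ f, IsDRDF G f ∧ ∑ v, f v = w}

open SimpleGraph

namespace SpiderDRDF

set_option linter.unusedSectionVars false
variable {V : Type*} [Fintype V] [DecidableEq V] {T : SimpleGraph V} {c : V}

lemma dist_ne_of_adj (hconn : T.Connected) (hac : T.IsAcyclic) {u v : V}
    (h : T.Adj u v) : T.dist c u ≠ T.dist c v := by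
  intro he
  obtain ⟨p, hp, hl⟩ := hconn.exists_path_of_dist c u
  have hvp : v ∉ p.support := by
    intro hs
    have h1 : T.dist c v ≤ (p.takeUntil v hs).length := dist_le _
    have h3 := congrArg Walk.length (p.take_spec hs)
    rw [Walk.length_append] at h3
    have h4 : (p.dropUntil v hs).length = 0 := by omega
    have h5 := Walk.eq_of_length_eq_zero h4
    exact h.ne h5.symm
  have hq : (p.concat h).IsPath := by
    rw [← Walk.isPath_reverse_iff, Walk.reverse_concat]
    exact (hp.reverse).cons (by simpa using hvp)
  obtain ⟨q', hq', hl'⟩ := hconn.exists_path_of_dist c v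
  have heq := hac.path_unique ⟨p.concat h, hq⟩ ⟨q', hq'⟩
  have hlen : (p.concat h).length = q'.length := by
    rw [Subtype.ext_iff] at heq
    exact congrArg Walk.length heq
  rw [Walk.length_concat] at hlen
  omega

lemma dist_step (hconn : T.Connected) (hac : T.IsAcyclic) {u v : V} (h : T.Adj u v) :
    T.dist c v = T.dist c u + 1 ∨ T.dist c u = T.dist c v + 1 := by
  have h1 : T.dist c v ≤ T.dist c u + T.dist u v := hconn.dist_triangle
  have h2 : T.dist c u ≤ T.dist c v + T.dist v u := hconn.dist_triangle
  have h3 : T.dist u v = 1 := dist_eq_one_iff_adj.mpr h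
  have h4 : T.dist v u = 1 := dist_eq_one_iff_adj.mpr h.symm
  have h5 := dist_ne_of_adj (c := c) hconn hac h
  omega

lemma exists_first (hconn : T.Connected) {a b : V} (hne : a ≠ b) :
    ∃ u, T.Adj a u ∧ T.dist u b + 1 = T.dist a b := by
  obtain ⟨p, hl⟩ := (hconn a b).exists_walk_length_eq_dist
  cases p with
  | nil => exact absurd rfl hne
  | @cons _ x _ h q =>
    refine ⟨x, h, ?_⟩
    have h1 : T.dist x b ≤ q.length := dist_le q
    have h2 : T.dist a b ≤ T.dist a x + T.dist x b := hconn.dist_triangle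
    have h3 : T.dist a x = 1 := dist_eq_one_iff_adj.mpr h
    simp only [Walk.length_cons] at hl
    omega

lemma exists_parent (hconn : T.Connected) {v : V} (hv : v ≠ c) :
    ∃ u, T.Adj v u ∧ T.dist c u + 1 = T.dist c v := by
  obtain ⟨u, ha, hd⟩ := exists_first hconn hv
  refine ⟨u, ha, ?_⟩
  rwa [SimpleGraph.dist_comm (u := c) (v := u), SimpleGraph.dist_comm (u := c) (v := v)]

lemma parent_unique (hconn : T.Connected) (hac : T.IsAcyclic) {v u u' : V}
    (h : T.Adj v u) (hd : T.dist c u + 1 = T.dist c v)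
    (h' : T.Adj v u') (hd' : T.dist c u' + 1 = T.dist c v) : u = u' := by
  obtain ⟨p, hp, hl⟩ := hconn.exists_path_of_dist c u
  obtain ⟨p', hp', hl'⟩ := hconn.exists_path_of_dist c u'
  have hvp : v ∉ p.support := by
    intro hs
    have h1 : T.dist c v ≤ (p.takeUntil v hs).length := dist_le _
    have h2 := Walk.length_takeUntil_le p hs
    omega
  have hvp' : v ∉ p'.support := by
    intro hs
    have h1 : T.dist c v ≤ (p'.takeUntil v hs).length := dist_le _
    have h2 := Walk.length_takeUntil_le p' hs
    omega
  have hq : (p.concat h.symm).IsPath := by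
    rw [← Walk.isPath_reverse_iff, Walk.reverse_concat]
    exact (hp.reverse).cons (by simpa using hvp)
  have hq' : (p'.concat h'.symm).IsPath := by
    rw [← Walk.isPath_reverse_iff, Walk.reverse_concat]
    exact (hp'.reverse).cons (by simpa using hvp')
  have heq := hac.path_unique ⟨p.concat h.symm, hq⟩ ⟨p'.concat h'.symm, hq'⟩
  rw [Subtype.ext_iff] at heq
  obtain ⟨hv, -⟩ := Walk.concat_inj heq
  exact hv

lemma child_unique (hconn : T.Connected) (hac : T.IsAcyclic)
    (hdeg : ∀ v : V, v ≠ c → {x | T.Adj v x}.ncard ≤ 2) {v u u' : V} (hv : v ≠ c)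
    (h : T.Adj v u) (hd : T.dist c u = T.dist c v + 1)
    (h' : T.Adj v u') (hd' : T.dist c u' = T.dist c v + 1) : u = u' := by
  by_contra hne
  obtain ⟨w, hw, hwd⟩ := exists_parent hconn hv
  have hwu : w ≠ u := by intro e; rw [e] at hwd; omega
  have hwu' : w ≠ u' := by intro e; rw [e] at hwd; omega
  have hsub : ({w, u, u'} : Set V) ⊆ {x | T.Adj v x} := by
    intro x hx
    rcases hx with rfl | rfl | rfl
    · exact hw
    · exact h
    · exact h'
  have h3 : ({w, u, u'} : Set V).ncard = 3 := by
    rw [Set.ncard_insert_of_notMem (by simp [hwu, hwu']),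
      Set.ncard_insert_of_notMem (by simp [hne]), Set.ncard_singleton]
  have h4 := Set.ncard_le_ncard hsub (Set.toFinite _)
  have h5 := hdeg v hv
  omega

/-- Maximal distance from `c` among "descendants" of `v` (vertices `w` such that `v`
lies on a geodesic from `c` to `w`). -/
noncomputable def KK (T : SimpleGraph V) (c v : V) : ℕ :=
  sSup ((fun w => T.dist c w) '' {w | T.dist c w = T.dist c v + T.dist v w})

lemma KK_le {v w : V} (h : T.dist c w = T.dist c v + T.dist v w) :
    T.dist c w ≤ KK T c v :=
  le_csSup (Set.Finite.bddAbove (Set.toFinite _)) ⟨w, h, rfl⟩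

lemma le_KK (v : V) : T.dist c v ≤ KK T c v :=
  KK_le (by simp)

lemma KK_attained (v : V) :
    ∃ w, T.dist c w = T.dist c v + T.dist v w ∧ T.dist c w = KK T c v := by
  have hne : ((fun w => T.dist c w) '' {w | T.dist c w = T.dist c v + T.dist v w}).Nonempty :=
    ⟨T.dist c v, v, by simp, rfl⟩
  have hmem := Nat.sSup_mem hne (Set.Finite.bddAbove (Set.toFinite _))
  obtain ⟨w, hw, hval⟩ := hmem
  exact ⟨w, hw, hval⟩

lemma desc_step (hconn : T.Connected) (hac : T.IsAcyclic) {v w : V} (hvw : w ≠ v)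
    (h : T.dist c w = T.dist c v + T.dist v w) :
    ∃ u, T.Adj v u ∧ T.dist c u = T.dist c v + 1 ∧ T.dist c w = T.dist c u + T.dist u w := by
  obtain ⟨u, ha, hd⟩ := exists_first hconn hvw.symm
  have htri : T.dist c w ≤ T.dist c u + T.dist u w := hconn.dist_triangle
  rcases dist_step (c := c) hconn hac ha with h1 | h1
  · exact ⟨u, ha, h1, by omega⟩
  · exfalso; omega

lemma KK_child (hconn : T.Connected) (hac : T.IsAcyclic) {v : V}
    (h : T.dist c v < KK T c v) :
    ∃ u, T.Adj v u ∧ T.dist c u = T.dist c v + 1 ∧ KK T c u = KK T c v := by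
  obtain ⟨w, hw, hwk⟩ := KK_attained (T := T) (c := c) v
  have hwv : w ≠ v := by rintro rfl; simp at hw; omega
  obtain ⟨u, ha, hdu, hanc⟩ := desc_step hconn hac hwv hw
  refine ⟨u, ha, hdu, le_antisymm ?_ ?_⟩
  · obtain ⟨w', hw', hw'k⟩ := KK_attained (T := T) (c := c) u
    rw [← hw'k]
    apply KK_le
    have t1 : T.dist c w' ≤ T.dist c v + T.dist v w' := hconn.dist_triangle
    have t2 : T.dist v w' ≤ T.dist v u + T.dist u w' := hconn.dist_triangle
    have t3 : T.dist v u = 1 := dist_eq_one_iff_adj.mpr ha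
    omega
  · rw [← hwk]
    exact KK_le hanc

lemma KK_parent (hconn : T.Connected) (hac : T.IsAcyclic)
    (hdeg : ∀ v : V, v ≠ c → {x | T.Adj v x}.ncard ≤ 2) {v u : V}
    (h : T.Adj v u) (hd : T.dist c u + 1 = T.dist c v) (h2 : 2 ≤ T.dist c v) :
    KK T c u = KK T c v := by
  have hune : u ≠ c := by
    rintro rfl
    rw [SimpleGraph.dist_self] at hd
    omega
  apply le_antisymm
  · obtain ⟨w, hw, hwk⟩ := KK_attained (T := T) (c := c) u
    rw [← hwk]
    by_cases hwu : w = u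
    · subst hwu
      have := le_KK (T := T) (c := c) v
      omega
    · obtain ⟨x, hx, hdx, hanc⟩ := desc_step hconn hac hwu hw
      have hxv : x = v := child_unique hconn hac hdeg hune hx hdx h.symm (by omega)
      rw [hxv] at hanc
      exact KK_le hanc
  · obtain ⟨w, hw, hwk⟩ := KK_attained (T := T) (c := c) v
    rw [← hwk]
    apply KK_le
    have t1 : T.dist c w ≤ T.dist c u + T.dist u w := hconn.dist_triangle
    have t2 : T.dist u w ≤ T.dist u v + T.dist v w := hconn.dist_triangle
    have t3 : T.dist u v = 1 := dist_eq_one_iff_adj.mpr h.symm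
    omega

/-- The double Roman dominating function we construct on a spider with "center" `c`. -/
noncomputable def spiderF (T : SimpleGraph V) (c : V) (v : V) : ℕ :=
  if v = c then 2
  else if KK T c v % 3 = 0 then (if T.dist c v % 3 = 2 then 3 else 0)
  else if KK T c v % 3 = 1 then
    (if T.dist c v = 1 then 1 else if T.dist c v % 3 = 0 then 3 else 0)
  else
    (if T.dist c v = 2 then 2
     else if T.dist c v = 1 then 0
     else if T.dist c v % 3 = 1 then 3 else 0)

lemma spiderF_c : spiderF T c c = 2 := if_pos rfl

lemma spiderF_le (v : V) : spiderF T c v ≤ 3 := by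
  unfold spiderF; split_ifs <;> omega

lemma char0 {v : V} (hv : spiderF T c v = 0) :
    v ≠ c ∧
      ((KK T c v % 3 = 0 ∧ T.dist c v % 3 ≠ 2) ∨
       (KK T c v % 3 = 1 ∧ T.dist c v ≠ 1 ∧ T.dist c v % 3 ≠ 0) ∨
       (KK T c v % 3 = 2 ∧ (T.dist c v = 1 ∨ (T.dist c v ≠ 2 ∧ T.dist c v % 3 ≠ 1)))) := by
  have hvc : v ≠ c := by intro h; rw [h, spiderF_c] at hv; omega
  refine ⟨hvc, ?_⟩
  simp only [spiderF, if_neg hvc] at hv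
  split_ifs at hv <;> omega

lemma char1 {v : V} (hv : spiderF T c v = 1) :
    v ≠ c ∧ KK T c v % 3 = 1 ∧ T.dist c v = 1 := by
  have hvc : v ≠ c := by intro h; rw [h, spiderF_c] at hv; omega
  refine ⟨hvc, ?_⟩
  simp only [spiderF, if_neg hvc] at hv
  split_ifs at hv <;> omega

lemma char2 {v : V} (hv : spiderF T c v = 2) (hvc : v ≠ c) :
    KK T c v % 3 = 2 ∧ T.dist c v = 2 := by
  simp only [spiderF, if_neg hvc] at hv
  split_ifs at hv <;> omega

lemma char3 {v : V} (hv : spiderF T c v = 3) :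
    v ≠ c ∧
      ((KK T c v % 3 = 0 ∧ T.dist c v % 3 = 2) ∨
       (KK T c v % 3 = 1 ∧ T.dist c v ≠ 1 ∧ T.dist c v % 3 = 0) ∨
       (KK T c v % 3 = 2 ∧ T.dist c v ≠ 2 ∧ T.dist c v ≠ 1 ∧ T.dist c v % 3 = 1)) := by
  have hvc : v ≠ c := by intro h; rw [h, spiderF_c] at hv; omega
  refine ⟨hvc, ?_⟩
  simp only [spiderF, if_neg hvc] at hv
  split_ifs at hv <;> omega

lemma parent_of (hconn : T.Connected) (hac : T.IsAcyclic)
    (hdeg : ∀ v : V, v ≠ c → {x | T.Adj v x}.ncard ≤ 2) {v : V}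
    (hvc : v ≠ c) (h2 : 2 ≤ T.dist c v) :
    ∃ u, T.Adj v u ∧ u ≠ c ∧ T.dist c u + 1 = T.dist c v ∧ KK T c u = KK T c v := by
  obtain ⟨u, ha, hd⟩ := exists_parent hconn hvc
  have huc : u ≠ c := by rintro rfl; rw [SimpleGraph.dist_self] at hd; omega
  exact ⟨u, ha, huc, hd, KK_parent hconn hac hdeg ha hd h2⟩

lemma child_of (hconn : T.Connected) (hac : T.IsAcyclic) {v : V}
    (h : T.dist c v < KK T c v) :
    ∃ u, T.Adj v u ∧ u ≠ c ∧ T.dist c u = T.dist c v + 1 ∧ KK T c u = KK T c v := by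
  obtain ⟨u, ha, hdu, hKu⟩ := KK_child hconn hac h
  have huc : u ≠ c := by rintro rfl; rw [SimpleGraph.dist_self] at hdu; omega
  exact ⟨u, ha, huc, hdu, hKu⟩

lemma spiderF_isDRDF (hconn : T.Connected) (hac : T.IsAcyclic)
    (hdeg : ∀ v : V, v ≠ c → {x | T.Adj v x}.ncard ≤ 2) :
    IsDRDF T (spiderF T c) := by
  refine ⟨spiderF_le, ?_, ?_⟩
  · intro v hv
    obtain ⟨hvc, hD⟩ := char0 hv
    have hd1 : 1 ≤ T.dist c v := hconn.pos_dist_of_ne (Ne.symm hvc)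
    have hdk : T.dist c v ≤ KK T c v := le_KK (T := T) (c := c) v
    rcases hD with ⟨hk, hd⟩ | ⟨hk, hdne, hd'⟩ | ⟨hk, hd⟩
    · by_cases h0 : T.dist c v % 3 = 0
      · obtain ⟨u, ha, huc, hdu, hKu⟩ := parent_of hconn hac hdeg hvc (by omega)
        right; refine ⟨u, ha, ?_⟩
        simp only [spiderF, if_neg huc]; split_ifs <;> omega
      · obtain ⟨u, ha, huc, hdu, hKu⟩ := child_of (T := T) (c := c) (v := v) hconn hac (by omega)
        right; refine ⟨u, ha, ?_⟩
        simp only [spiderF, if_neg huc]; split_ifs <;> omega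
    · by_cases h1 : T.dist c v % 3 = 1
      · obtain ⟨u, ha, huc, hdu, hKu⟩ := parent_of hconn hac hdeg hvc (by omega)
        right; refine ⟨u, ha, ?_⟩
        simp only [spiderF, if_neg huc]; split_ifs <;> omega
      · obtain ⟨u, ha, huc, hdu, hKu⟩ := child_of (T := T) (c := c) (v := v) hconn hac (by omega)
        right; refine ⟨u, ha, ?_⟩
        simp only [spiderF, if_neg huc]; split_ifs <;> omega
    · rcases hd with hd1' | ⟨hd2, hdm⟩
      · obtain ⟨u, ha, huc, hdu, hKu⟩ := child_of (T := T) (c := c) (v := v) hconn hac (by omega)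
        left
        have hcu : c ≠ u := by
          rintro rfl; rw [SimpleGraph.dist_self] at hdu; omega
        have hadjc : T.Adj v c := (dist_eq_one_iff_adj.mp hd1').symm
        refine ⟨c, u, hcu, hadjc, ha, spiderF_c, ?_⟩
        simp only [spiderF, if_neg huc]; split_ifs <;> omega
      · by_cases h0 : T.dist c v % 3 = 0
        · obtain ⟨u, ha, huc, hdu, hKu⟩ := child_of (T := T) (c := c) (v := v) hconn hac (by omega)
          right; refine ⟨u, ha, ?_⟩
          simp only [spiderF, if_neg huc]; split_ifs <;> omega
        · obtain ⟨u, ha, huc, hdu, hKu⟩ := parent_of hconn hac hdeg hvc (by omega)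
          right; refine ⟨u, ha, ?_⟩
          simp only [spiderF, if_neg huc]; split_ifs <;> omega
  · intro v hv
    obtain ⟨hvc, hk, hd⟩ := char1 hv
    exact ⟨c, (dist_eq_one_iff_adj.mp hd).symm, by rw [spiderF_c]⟩

lemma spiderF_sum_le (hconn : T.Connected) (hac : T.IsAcyclic)
    (hdeg : ∀ v : V, v ≠ c → {x | T.Adj v x}.ncard ≤ 2) :
    ∑ v, spiderF T c v ≤ Fintype.card V + 1 := by
  classical
  have E2 : ∀ v, spiderF T c v = 2 → v ≠ c →
      ∃ u, T.Adj v u ∧ T.dist c u + 1 = T.dist c v ∧ spiderF T c u = 0 := by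
    intro v hv hvc
    obtain ⟨hk, hd⟩ := char2 hv hvc
    obtain ⟨u, ha, huc, hdu, hKu⟩ := parent_of hconn hac hdeg hvc (by omega)
    refine ⟨u, ha, hdu, ?_⟩
    simp only [spiderF, if_neg huc]; split_ifs <;> omega
  have E3p : ∀ v, spiderF T c v = 3 →
      ∃ u, T.Adj v u ∧ T.dist c u + 1 = T.dist c v ∧ spiderF T c u = 0 := by
    intro v hv
    obtain ⟨hvc, hD⟩ := char3 hv
    have hd1 : 1 ≤ T.dist c v := hconn.pos_dist_of_ne (Ne.symm hvc)
    have h2 : 2 ≤ T.dist c v := by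
      rcases hD with ⟨h1, h2⟩ | ⟨h1, h2, h3⟩ | ⟨h1, h2, h3, h4⟩ <;> omega
    obtain ⟨u, ha, huc, hdu, hKu⟩ := parent_of hconn hac hdeg hvc h2
    refine ⟨u, ha, hdu, ?_⟩
    rcases hD with ⟨h1, h2'⟩ | ⟨h1, h2', h3⟩ | ⟨h1, h2', h3, h4⟩ <;>
      (simp only [spiderF, if_neg huc]; split_ifs <;> omega)
  have E3c : ∀ v, spiderF T c v = 3 →
      ∃ u, T.Adj v u ∧ T.dist c u = T.dist c v + 1 ∧ spiderF T c u = 0 := by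
    intro v hv
    obtain ⟨hvc, hD⟩ := char3 hv
    have hd1 : 1 ≤ T.dist c v := hconn.pos_dist_of_ne (Ne.symm hvc)
    have hdk : T.dist c v ≤ KK T c v := le_KK (T := T) (c := c) v
    have hlt : T.dist c v < KK T c v := by
      rcases hD with ⟨h1, h2⟩ | ⟨h1, h2, h3⟩ | ⟨h1, h2, h3, h4⟩ <;> omega
    obtain ⟨u, ha, huc, hdu, hKu⟩ := child_of (T := T) (c := c) (v := v) hconn hac hlt
    refine ⟨u, ha, hdu, ?_⟩
    rcases hD with ⟨h1, h2'⟩ | ⟨h1, h2', h3⟩ | ⟨h1, h2', h3, h4⟩ <;>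
      (simp only [spiderF, if_neg huc]; split_ifs <;> omega)
  obtain ⟨gp, hgp⟩ : ∃ gp : V → V, ∀ v : V,
      (∃ u, T.Adj v u ∧ T.dist c u + 1 = T.dist c v ∧ spiderF T c u = 0) →
      T.Adj v (gp v) ∧ T.dist c (gp v) + 1 = T.dist c v ∧ spiderF T c (gp v) = 0 := by
    refine ⟨fun v => if h : (∃ u, T.Adj v u ∧ T.dist c u + 1 = T.dist c v ∧
      spiderF T c u = 0) then h.choose else v, fun v h => ?_⟩
    beta_reduce
    rw [dif_pos h]
    exact h.choose_spec
  obtain ⟨gc, hgc⟩ : ∃ gc : V → V, ∀ v : V,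
      (∃ u, T.Adj v u ∧ T.dist c u = T.dist c v + 1 ∧ spiderF T c u = 0) →
      T.Adj v (gc v) ∧ T.dist c (gc v) = T.dist c v + 1 ∧ spiderF T c (gc v) = 0 := by
    refine ⟨fun v => if h : (∃ u, T.Adj v u ∧ T.dist c u = T.dist c v + 1 ∧
      spiderF T c u = 0) then h.choose else v, fun v h => ?_⟩
    beta_reduce
    rw [dif_pos h]
    exact h.choose_spec
  set A0 : Finset V := Finset.univ.filter (fun v => spiderF T c v = 0) with hA0
  set A1 : Finset V := Finset.univ.filter (fun v => spiderF T c v = 1) with hA1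
  set A2 : Finset V := Finset.univ.filter (fun v => spiderF T c v = 2) with hA2
  set A3 : Finset V := Finset.univ.filter (fun v => spiderF T c v = 3) with hA3
  set S2 : Finset V := Finset.univ.filter (fun v => spiderF T c v = 2 ∧ v ≠ c) with hS2
  have hPp : ∀ v : V, v ∈ S2 ∪ A3 →
      T.Adj v (gp v) ∧ T.dist c (gp v) + 1 = T.dist c v ∧ spiderF T c (gp v) = 0 := by
    intro v hv
    apply hgp
    rcases Finset.mem_union.mp hv with h | h
    · obtain ⟨-, h2, hne⟩ := Finset.mem_filter.mp h
      exact E2 v h2 hne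
    · exact E3p v (Finset.mem_filter.mp h).2
  have hPc : ∀ v : V, v ∈ A3 →
      T.Adj v (gc v) ∧ T.dist c (gc v) = T.dist c v + 1 ∧ spiderF T c (gc v) = 0 := by
    intro v hv
    exact hgc v (E3c v (Finset.mem_filter.mp hv).2)
  have hne_c : ∀ u : V, spiderF T c u = 0 → u ≠ c := by
    intro u h e
    rw [e, spiderF_c] at h
    omega
  have hinjp : Set.InjOn gp ↑(S2 ∪ A3) := by
    intro a ha b hb he
    have sa := hPp a (Finset.mem_coe.mp ha)
    have sb := hPp b (Finset.mem_coe.mp hb)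
    rw [← he] at sb
    have huc : gp a ≠ c := hne_c _ sa.2.2
    have hda := sa.2.1
    have hdb := sb.2.1
    exact child_unique hconn hac hdeg huc sa.1.symm (by omega) sb.1.symm (by omega)
  have hinjc : Set.InjOn gc ↑A3 := by
    intro a ha b hb he
    have sa := hPc a (Finset.mem_coe.mp ha)
    have sb := hPc b (Finset.mem_coe.mp hb)
    rw [← he] at sb
    have hda := sa.2.1
    have hdb := sb.2.1
    exact parent_unique (T := T) (c := c) hconn hac sa.1.symm (by omega) sb.1.symm (by omega)
  set Ip : Finset V := (S2 ∪ A3).image gp with hIp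
  set Ic : Finset V := A3.image gc with hIc
  have hIpA0 : Ip ⊆ A0 := by
    intro u hu
    obtain ⟨v, hv, rfl⟩ := Finset.mem_image.mp hu
    exact Finset.mem_filter.mpr ⟨Finset.mem_univ _, (hPp v hv).2.2⟩
  have hIcA0 : Ic ⊆ A0 := by
    intro u hu
    obtain ⟨v, hv, rfl⟩ := Finset.mem_image.mp hu
    exact Finset.mem_filter.mpr ⟨Finset.mem_univ _, (hPc v hv).2.2⟩
  have hdisj : Disjoint Ip Ic := by
    rw [Finset.disjoint_left]
    intro u hup hucm
    obtain ⟨v, hv, he⟩ := Finset.mem_image.mp hup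
    obtain ⟨v', hv', he'⟩ := Finset.mem_image.mp hucm
    have sa := hPp v hv
    have sb := hPc v' hv'
    rw [he] at sa
    rw [he'] at sb
    have hv'3 : spiderF T c v' = 3 := (Finset.mem_filter.mp hv').2
    have hv'c : v' ≠ c := (char3 hv'3).1
    have hd1 : 1 ≤ T.dist c v' := hconn.pos_dist_of_ne (Ne.symm hv'c)
    have hda := sa.2.1
    have hdb := sb.2.1
    have hKuv : KK T c u = KK T c v :=
      KK_parent hconn hac hdeg sa.1 sa.2.1 (by omega)
    have hKv'u : KK T c v' = KK T c u :=
      KK_parent hconn hac hdeg sb.1.symm (by omega) (by omega)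
    rcases Finset.mem_union.mp hv with h2m | h3m
    · obtain ⟨-, hf2, hvc⟩ := Finset.mem_filter.mp h2m
      obtain ⟨hk, hd⟩ := char2 hf2 hvc
      omega
    · have hf3 := (Finset.mem_filter.mp h3m).2
      obtain ⟨hvc, hD⟩ := char3 hf3
      obtain ⟨-, hD'⟩ := char3 hv'3
      rcases hD with ⟨x1, x2⟩ | ⟨x1, x2, x3⟩ | ⟨x1, x2, x3, x4⟩ <;>
        rcases hD' with ⟨y1, y2⟩ | ⟨y1, y2, y3⟩ | ⟨y1, y2, y3, y4⟩ <;> omega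
  have h1 : (S2 ∪ A3).card = Ip.card := (Finset.card_image_of_injOn hinjp).symm
  have h2 : A3.card = Ic.card := (Finset.card_image_of_injOn hinjc).symm
  have h3 : Ip.card + Ic.card ≤ A0.card := by
    rw [← Finset.card_union_of_disjoint hdisj]
    exact Finset.card_le_card (Finset.union_subset hIpA0 hIcA0)
  have h4 : S2.card + A3.card = (S2 ∪ A3).card := by
    rw [Finset.card_union_of_disjoint]
    rw [Finset.disjoint_left]
    intro x hx hx'
    have e2 := (Finset.mem_filter.mp hx).2.1
    have e3 := (Finset.mem_filter.mp hx').2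
    omega
  have hsum : ∑ v, spiderF T c v = A1.card + 2 * A2.card + 3 * A3.card := by
    rw [hA1, hA2, hA3, Finset.card_filter, Finset.card_filter, Finset.card_filter,
      Finset.mul_sum, Finset.mul_sum, ← Finset.sum_add_distrib, ← Finset.sum_add_distrib]
    refine Finset.sum_congr rfl fun v _ => ?_
    have hb := spiderF_le (T := T) (c := c) v
    set m := spiderF T c v with hm
    interval_cases m <;> simp
  have hcard : Fintype.card V = A0.card + A1.card + A2.card + A3.card := by
    rw [hA0, hA1, hA2, hA3, ← Finset.card_univ, Finset.card_eq_sum_ones,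
      Finset.card_filter, Finset.card_filter, Finset.card_filter, Finset.card_filter,
      ← Finset.sum_add_distrib, ← Finset.sum_add_distrib, ← Finset.sum_add_distrib]
    refine Finset.sum_congr rfl fun v _ => ?_
    have hb := spiderF_le (T := T) (c := c) v
    set m := spiderF T c v with hm
    interval_cases m <;> simp
  have hcA2 : c ∈ A2 := Finset.mem_filter.mpr ⟨Finset.mem_univ _, spiderF_c⟩
  have hS2A2 : S2 = A2.erase c := by
    ext x
    simp only [hS2, hA2, Finset.mem_erase, Finset.mem_filter, Finset.mem_univ, true_and]
    tauto
  have h5 : S2.card = A2.card - 1 := by rw [hS2A2, Finset.card_erase_of_mem hcA2]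
  have h6 : 1 ≤ A2.card := Finset.card_pos.mpr ⟨c, hcA2⟩
  omega

end SpiderDRDF

/-- If `T` is a spider (a tree with at most one vertex of degree at least `3`) of
order `n ≥ 3`, then `γ_dR(T) ≤ n + 1`. -/
theorem gammaDR_spider_le {V : Type*} [Fintype V] (T : SimpleGraph V)
    (hconn : T.Connected) (hacyclic : T.IsAcyclic)
    (hspider : ∀ v w, 3 ≤ {x | T.Adj v x}.ncard → 3 ≤ {x | T.Adj w x}.ncard → v = w)
    (hn : 3 ≤ Fintype.card V) :
    gammaDR T ≤ Fintype.card V + 1 := by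
  classical
  have hnonempty : Nonempty V := Fintype.card_pos_iff.mp (by omega)
  obtain ⟨c, hdeg⟩ : ∃ c : V, ∀ v : V, v ≠ c → {x | T.Adj v x}.ncard ≤ 2 := by
    by_cases hex : ∃ v : V, 3 ≤ {x | T.Adj v x}.ncard
    · obtain ⟨v0, hv0⟩ := hex
      refine ⟨v0, fun v hv => ?_⟩
      by_contra hcon
      push_neg at hcon
      exact hv (hspider v v0 (by omega) hv0)
    · push_neg at hex
      exact ⟨Classical.arbitrary V, fun v _ => by have := hex v; omega⟩
  have hD := SpiderDRDF.spiderF_isDRDF (T := T) (c := c) hconn hacyclic hdeg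
  have hle := SpiderDRDF.spiderF_sum_le (T := T) (c := c) hconn hacyclic hdeg
  show sInf {w | ∃ f, IsDRDF T f ∧ ∑ v, f v = w} ≤ Fintype.card V + 1
  exact le_trans (Nat.sInf_le ⟨_, hD, rfl⟩) hle
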